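/- Let K be ℝ or ℂ and let G be an abelian subgroup of GL(n,K). There exists a G-invariant dense open set U ⊆ K^n, whose complement is a union of at most n G-invariant linear subspaces of dimension n−1 or n−2 and in which every orbit is minimal in U, such that: if an orbit O = G(v) is locally dense in K^n (i.e. the closure of O has nonempty interior), then O ⊆ U and, for every connected component C of U with O ∩ C ≠ ∅: (i) C ⊆ closure(O), i.e. O is dense in C; (ii) for every w ∈ U with G(w) ∩ C ≠ ∅, C ⊆ closure(G(w)). -/

import Mathlib

/-- The orbit of a vector `v` under a subgroup `G` of `GL(n, K)` acting linearly on `Kⁿ`. -/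
def glOrbit {K : Type*} [Field K] {n : ℕ} (G : Subgroup (Matrix.GeneralLinearGroup (Fin n) K))
    (v : Fin n → K) : Set (Fin n → K) :=
  {w | ∃ A ∈ G, (A : Matrix (Fin n) (Fin n) K).mulVec v = w}


set_option maxHeartbeats 2000000
set_option synthInstance.maxHeartbeats 1000000
set_option linter.unusedSectionVars false
set_option linter.unusedTactic false

namespace LDO


open Module Submodule

variable {K : Type*} [RCLike K] {n : ℕ} {R : Type*} [CommRing R] [Algebra K R]
  [Module.Finite K R]
  [Module R (Fin n → K)] [IsScalarTower K R (Fin n → K)]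

/-- A finite-dimensional commutative algebra of matrices is inverse closed: an element whose
image is an invertible matrix is a unit. -/
theorem unitLift (φ : R →ₐ[K] Matrix (Fin n) (Fin n) K) (hφ : Function.Injective φ)
    (r : R) (h : IsUnit (φ r)) : IsUnit r := by
  have hinj : Function.Injective (LinearMap.mulLeft K r) := by
    intro a b hab
    simp only [LinearMap.mulLeft_apply] at hab
    have : φ r * φ a = φ r * φ b := by rw [← map_mul, ← map_mul, hab]
    exact hφ (h.mul_left_cancel this)
  obtain ⟨s, hs⟩ := (LinearMap.injective_iff_surjective.mp hinj) 1
  exact IsUnit.of_mul_eq_one (a := r) s (by simpa [LinearMap.mulLeft_apply] using hs)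

theorem nakayama (φ : R →ₐ[K] Matrix (Fin n) (Fin n) K) (hφ : Function.Injective φ)
    (hsmul : ∀ (r : R) (x : Fin n → K), r • x = (φ r).mulVec x)
    (𝔪 : Ideal R) (hm : 𝔪.IsMaximal) :
    (𝔪 • (⊤ : Submodule R (Fin n → K))) ≠ ⊤ := by
  intro htop
  haveI : Module.Finite R (Fin n → K) := Module.Finite.of_restrictScalars_finite K R _
  obtain ⟨a, ha1, ha0⟩ :=
    Submodule.exists_sub_one_mem_and_smul_eq_zero_of_fg_of_le_smul 𝔪 ⊤
      (Module.finite_def.mp inferInstance) (le_of_eq htop.symm)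
  have hmv : ∀ x : Fin n → K, (φ a).mulVec x = 0 := by
    intro x
    rw [← hsmul]
    exact ha0 x trivial
  have hA0 : φ a = 0 := by
    ext i j
    have := congrFun (hmv (Pi.single j 1)) i
    simpa using this
  have ha : a = 0 := hφ (by simpa using hA0)
  rw [ha] at ha1
  have h1 : (1 : R) ∈ 𝔪 := by simpa using 𝔪.neg_mem ha1
  exact hm.ne_top ((Ideal.eq_top_iff_one 𝔪).mpr h1)

/-- Existence of a maximal proper `R`-submodule containing `𝔪 • ⊤`. -/
theorem existsMaxSub (φ : R →ₐ[K] Matrix (Fin n) (Fin n) K) (hφ : Function.Injective φ)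
    (hsmul : ∀ (r : R) (x : Fin n → K), r • x = (φ r).mulVec x)
    (𝔪 : Ideal R) (hm : 𝔪.IsMaximal) :
    ∃ V : Submodule R (Fin n → K), 𝔪 • ⊤ ≤ V ∧ V ≠ ⊤ ∧
      ∀ W : Submodule R (Fin n → K), V < W → W = ⊤ := by
  classical
  set S : Set (Submodule R (Fin n → K)) := {W | 𝔪 • ⊤ ≤ W ∧ W ≠ ⊤} with hS
  set T : Set ℕ := (fun W => finrank K (restrictScalars K W)) '' S with hT
  have hTne : T.Nonempty := ⟨_, ⟨𝔪 • ⊤, ⟨le_rfl, nakayama φ hφ hsmul 𝔪 hm⟩, rfl⟩⟩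
  have hTbdd : BddAbove T := by
    refine ⟨finrank K (Fin n → K), ?_⟩
    rintro d ⟨W, _, rfl⟩
    exact Submodule.finrank_le _
  obtain ⟨V, hVS, hVd⟩ := Nat.sSup_mem hTne hTbdd
  refine ⟨V, hVS.1, hVS.2, ?_⟩
  intro W hVW
  by_contra hW
  have hWS : W ∈ S := ⟨le_trans hVS.1 hVW.le, hW⟩
  have hlt : Submodule.restrictScalars K V < Submodule.restrictScalars K W := by
    rw [lt_iff_le_and_ne] at hVW ⊢
    refine ⟨fun x hx => hVW.1 hx, ?_⟩
    intro hEq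
    exact hVW.2 (Submodule.restrictScalars_injective K _ _ hEq)
  have hfin : finrank K (restrictScalars K V) < finrank K (restrictScalars K W) :=
    Submodule.finrank_lt_finrank_of_lt hlt
  have hmem : finrank K (restrictScalars K W) ∈ T := ⟨W, hWS, rfl⟩
  have h2 := le_csSup hTbdd hmem
  have hVd' : finrank K (restrictScalars K V) = sSup T := hVd
  omega



open Module Submodule

theorem fieldRank (K : Type*) [RCLike K] (F : Type*) [Field F] [Algebra K F]
    [FiniteDimensional K F] :
    finrank K F = 1 ∨ finrank K F = 2 := by
  letI : Algebra ℝ F := RingHom.toAlgebra ((algebraMap K F).comp (algebraMap ℝ K))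
  haveI : IsScalarTower ℝ K F := IsScalarTower.of_algebraMap_eq fun x => rfl
  haveI : FiniteDimensional ℝ F := FiniteDimensional.trans ℝ K F
  haveI : NoZeroSMulDivisors ℝ F :=
    by infer_instance
  haveI : NoZeroSMulDivisors K F :=
    by infer_instance
  haveI : Algebra.IsAlgebraic ℝ F := Algebra.IsAlgebraic.of_finite ℝ F
  let ψ : F →ₐ[ℝ] ℂ := IsAlgClosed.lift
  have hinj : Function.Injective ψ.toLinearMap := ψ.toRingHom.injective
  have h2 : finrank ℝ F ≤ 2 := by
    have := LinearMap.finrank_le_finrank_of_injective hinj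
    rwa [Complex.finrank_real_complex] at this
  have hmul : finrank ℝ K * finrank K F = finrank ℝ F := Module.finrank_mul_finrank ℝ K F
  have h1K : 0 < finrank ℝ K := Module.finrank_pos
  have h1F : 0 < finrank K F := Module.finrank_pos
  have : finrank K F ≤ finrank ℝ K * finrank K F := Nat.le_mul_of_pos_left _ h1K
  omega


theorem codim (𝔪 : Ideal R) (hm : 𝔪.IsMaximal)
    (V : Submodule R (Fin n → K)) (hle : 𝔪 • ⊤ ≤ V) (hne : V ≠ ⊤)
    (hmax : ∀ W : Submodule R (Fin n → K), V < W → W = ⊤) :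
    finrank K (restrictScalars K V) + finrank K (R ⧸ 𝔪) = n ∧
      (finrank K (R ⧸ 𝔪) = 1 ∨ finrank K (R ⧸ 𝔪) = 2) := by
  haveI := hm
  letI : Field (R ⧸ 𝔪) := Ideal.Quotient.field 𝔪
  haveI : FiniteDimensional K (R ⧸ 𝔪) :=
    Module.Finite.of_surjective (Ideal.Quotient.mkₐ K 𝔪).toLinearMap
      (Ideal.Quotient.mkₐ_surjective K 𝔪)
  obtain ⟨xb, hxb⟩ : ∃ x, x ∉ V := by
    by_contra h; push_neg at h; exact hne (eq_top_iff.mpr fun x _ => h x)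
  let θ : R →ₗ[K] (Fin n → K) :=
    { toFun := fun r => r • xb
      map_add' := fun a b => add_smul a b xb
      map_smul' := fun k a => by simp [smul_assoc] }
  let ψ : R →ₗ[K] ((Fin n → K) ⧸ Submodule.restrictScalars K V) := (Submodule.restrictScalars K V).mkQ.comp θ
  have hψ0 : ∀ r : R, ψ r = 0 ↔ r • xb ∈ V := by
    intro r
    show (Submodule.restrictScalars K V).mkQ (r • xb) = 0 ↔ _
    rw [Submodule.mkQ_apply, Submodule.Quotient.mk_eq_zero]
    exact Iff.rfl
  have hsup : Submodule.span R {xb} ⊔ V = ⊤ := by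
    have hlt : V < Submodule.span R {xb} ⊔ V :=
      lt_of_le_of_ne le_sup_right
        (fun hEq => hxb (by rw [hEq]; exact Submodule.mem_sup_left (Submodule.subset_span rfl)))
    exact hmax _ hlt
  have hψsurj : Function.Surjective ψ := by
    intro q
    obtain ⟨y, rfl⟩ := Submodule.mkQ_surjective _ q
    have hy : y ∈ Submodule.span R {xb} ⊔ V := by rw [hsup]; trivial
    obtain ⟨z, hz, w, hw, rfl⟩ := Submodule.mem_sup.mp hy
    obtain ⟨r, rfl⟩ := Submodule.mem_span_singleton.mp hz
    refine ⟨r, ?_⟩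
    show Submodule.Quotient.mk (r • xb) = Submodule.Quotient.mk (r • xb + w)
    rw [Submodule.Quotient.eq]
    have : r • xb - (r • xb + w) = -w := by abel
    rw [this]
    exact Submodule.neg_mem _ hw
  have hψker : LinearMap.ker ψ = Submodule.restrictScalars K 𝔪 := by
    ext r
    rw [LinearMap.mem_ker, hψ0]
    constructor
    · intro hrx
      by_contra hr
      have hmlt : 𝔪 < 𝔪 ⊔ Ideal.span {r} :=
        lt_of_le_of_ne le_sup_left
          (fun hEq => hr (by
            have : r ∈ 𝔪 ⊔ Ideal.span {r} :=
              Submodule.mem_sup_right (Ideal.subset_span rfl)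
            rwa [← hEq] at this))
      have htop : 𝔪 ⊔ Ideal.span {r} = ⊤ := hm.out.2 _ hmlt
      have h1 : (1 : R) ∈ 𝔪 ⊔ Ideal.span {r} := by rw [htop]; trivial
      obtain ⟨a, ha, b, hb, hab⟩ := Submodule.mem_sup.mp h1
      obtain ⟨c, rfl⟩ := Ideal.mem_span_singleton'.mp hb
      apply hxb
      have hx : xb = a • xb + c • (r • xb) := by
        rw [smul_smul, ← add_smul, hab, one_smul]
      rw [hx]
      exact V.add_mem (hle (Submodule.smul_mem_smul ha trivial)) (V.smul_mem c hrx)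
    · intro hr
      exact hle (Submodule.smul_mem_smul hr trivial)
  let e1 := LinearMap.quotKerEquivOfSurjective ψ hψsurj
  let e2 := Submodule.quotEquivOfEq _ _ hψker
  let e3 := Submodule.Quotient.restrictScalarsEquiv K 𝔪
  have hdim : finrank K ((Fin n → K) ⧸ Submodule.restrictScalars K V) = finrank K (R ⧸ 𝔪) := by
    rw [← e1.finrank_eq, e2.finrank_eq, e3.finrank_eq]
  have hfr := fieldRank K (R ⧸ 𝔪)
  refine ⟨?_, hfr⟩
  have hq := Submodule.finrank_quotient_add_finrank (restrictScalars K V)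
  have hn : finrank K (Fin n → K) = n := by simp [Module.finrank_pi]
  rw [hdim, hn] at hq
  omega



open Module Submodule


theorem cardBound
    (VV : {I : Ideal R // I.IsMaximal} → Submodule R (Fin n → K))
    (hVle : ∀ I : {I : Ideal R // I.IsMaximal}, (I : Ideal R) • ⊤ ≤ VV I)
    (hVne : ∀ I, VV I ≠ ⊤)
    (s : Finset {I : Ideal R // I.IsMaximal}) : s.card ≤ n := by
  classical
  set f : ↥s → Submodule K (Fin n → K) := fun j => restrictScalars K (VV j) with hf
  let Θ : (Fin n → K) →ₗ[K] ((j : ↥s) → (Fin n → K) ⧸ f j) :=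
    LinearMap.pi (fun j => (f j).mkQ)
  set II : ↥s → Ideal R := fun j => ((j : {I : Ideal R // I.IsMaximal}) : Ideal R) with hII
  have hcop : Pairwise (Function.onFun IsCoprime II) := by
    intro i j hij
    refine (Ideal.isCoprime_iff_sup_eq).mpr
      (Ideal.IsMaximal.coprime_of_ne (i : {I : Ideal R // I.IsMaximal}).2
        (j : {I : Ideal R // I.IsMaximal}).2 ?_)
    intro hEq
    exact hij (Subtype.val_injective (Subtype.val_injective hEq))
  have hsurjR := Ideal.quotientInfToPiQuotient_surj hcop
  have ha : ∀ j : ↥s, ∃ a : R,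
      (∀ i : ↥s, i ≠ j → a ∈ II i) ∧ a - 1 ∈ II j := by
    intro j
    obtain ⟨q, hq⟩ := hsurjR (Pi.single j (1 : R ⧸ II j))
    obtain ⟨a, rfl⟩ := Ideal.Quotient.mk_surjective q
    refine ⟨a, ?_, ?_⟩
    · intro i hij
      have h1 := congrFun hq i
      rw [Ideal.quotientInfToPiQuotient_mk'] at h1
      rw [Pi.single_eq_of_ne hij] at h1
      exact (Ideal.Quotient.eq_zero_iff_mem).mp h1
    · have h2 := congrFun hq j
      rw [Ideal.quotientInfToPiQuotient_mk'] at h2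
      rw [Pi.single_eq_same] at h2
      rw [← Ideal.Quotient.eq_zero_iff_mem, map_sub, map_one, h2, sub_self]
  choose a haoff hadiag using ha
  have hΘ : Function.Surjective Θ := by
    intro c
    choose y hy using fun j : ↥s => Submodule.mkQ_surjective (f j) (c j)
    refine ⟨∑ j : ↥s, a j • y j, ?_⟩
    funext i
    show (f i).mkQ (∑ j : ↥s, a j • y j) = c i
    rw [map_sum]
    rw [Finset.sum_eq_single i]
    · rw [← hy i]
      rw [Submodule.mkQ_apply, Submodule.mkQ_apply, Submodule.Quotient.eq]
      have : a i • y i - y i = (a i - 1) • y i := by rw [sub_smul, one_smul]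
      rw [this]
      exact hVle i (Submodule.smul_mem_smul (hadiag i) trivial)
    · intro j _ hij
      rw [Submodule.mkQ_apply, Submodule.Quotient.mk_eq_zero]
      exact hVle i (Submodule.smul_mem_smul (haoff j i (Ne.symm hij)) trivial)
    · intro h
      exact absurd (Finset.mem_univ i) h
  haveI hFD : ∀ j : ↥s, FiniteDimensional K ((Fin n → K) ⧸ f j) := fun j =>
    Module.Finite.of_surjective (f j).mkQ (Submodule.mkQ_surjective _)
  haveI hNT : ∀ j : ↥s, Nontrivial ((Fin n → K) ⧸ f j) := fun j =>
    Submodule.Quotient.nontrivial_iff.mpr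
      (lt_top_iff_ne_top.mpr (fun hEq => hVne j (Submodule.restrictScalars_injective K _ _ (by rw [show Submodule.restrictScalars K (VV (j : {I : Ideal R // I.IsMaximal})) = f j from rfl, hEq, Submodule.restrictScalars_top])))).ne
  have hpi : finrank K ((j : ↥s) → (Fin n → K) ⧸ f j) = ∑ j : ↥s, finrank K ((Fin n → K) ⧸ f j) :=
    Module.finrank_pi_fintype K
  have hle : finrank K ((j : ↥s) → (Fin n → K) ⧸ f j) ≤ n := by
    have hrk := LinearMap.finrank_range_add_finrank_ker Θ
    have hrange : LinearMap.range Θ = ⊤ := LinearMap.range_eq_top.mpr hΘ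
    rw [hrange, finrank_top] at hrk
    have hn : finrank K (Fin n → K) = n := by simp [Module.finrank_pi]
    rw [hn] at hrk
    omega
  have hone : ∀ j : ↥s, 1 ≤ finrank K ((Fin n → K) ⧸ f j) := fun j => Module.finrank_pos
  have hsum : (s.card : ℕ) ≤ ∑ j : ↥s, finrank K ((Fin n → K) ⧸ f j) := by
    have : ∑ _j : ↥s, 1 ≤ ∑ j : ↥s, finrank K ((Fin n → K) ⧸ f j) :=
      Finset.sum_le_sum (fun j _ => hone j)
    simpa [Finset.card_univ] using this
  omega



open Module Submodule

theorem aux {K : Type*} [RCLike K] {n : ℕ}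
    (G : Subgroup (Matrix.GeneralLinearGroup (Fin n) K))
    {R : Type*} [CommRing R] [Algebra K R] [Module.Finite K R]
    [Module R (Fin n → K)] [IsScalarTower K R (Fin n → K)]
    (φ : R →ₐ[K] Matrix (Fin n) (Fin n) K) (hφ : Function.Injective φ)
    (hsmul : ∀ (r : R) (x : Fin n → K), r • x = (φ r).mulVec x)
    (hG : ∀ g : Matrix.GeneralLinearGroup (Fin n) K, g ∈ G →
      ∃ rr : R, φ rr = (g : Matrix (Fin n) (Fin n) K)) :
    ∃ U : Set (Fin n → K),
      IsOpen U ∧ Dense U ∧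
      (∀ A ∈ G, ∀ v ∈ U, (A : Matrix (Fin n) (Fin n) K).mulVec v ∈ U) ∧
      (∃ (r : ℕ) (V : Fin r → Submodule K (Fin n → K)), r ≤ n ∧
        (∀ k, ∀ A ∈ G, ∀ x ∈ V k, (A : Matrix (Fin n) (Fin n) K).mulVec x ∈ V k) ∧
        (∀ k, Module.finrank K (V k) = n - 1 ∨ Module.finrank K (V k) = n - 2) ∧
        Uᶜ = ⋃ k, (V k : Set (Fin n → K))) ∧
      (∀ v : Fin n → K, glOrbit G v ⊆ U →
        ∀ x ∈ closure (glOrbit G v) ∩ U,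
          closure (glOrbit G x) ∩ U = closure (glOrbit G v) ∩ U) ∧
      (∀ v : Fin n → K, (interior (closure (glOrbit G v))).Nonempty →
        glOrbit G v ⊆ U ∧
        (∀ C : Set (Fin n → K), (∃ x ∈ U, C = connectedComponentIn U x) →
          (glOrbit G v ∩ C).Nonempty →
          C ⊆ closure (glOrbit G v) ∧
          (∀ w ∈ U, (glOrbit G w ∩ C).Nonempty → C ⊆ closure (glOrbit G w)))) := by
  classical
  -- choose maximal invariant submodules
  have hVex : ∀ I : {I : Ideal R // I.IsMaximal},
      ∃ V : Submodule R (Fin n → K), (I : Ideal R) • ⊤ ≤ V ∧ V ≠ ⊤ ∧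
        ∀ W : Submodule R (Fin n → K), V < W → W = ⊤ :=
    fun I => existsMaxSub φ hφ hsmul I.1 I.2
  choose VV hVle hVne hVmax using hVex
  have hcard : ∀ s : Finset {I : Ideal R // I.IsMaximal}, s.card ≤ n :=
    cardBound VV hVle hVne
  haveI hfin : Finite {I : Ideal R // I.IsMaximal} := by
    by_contra hinf
    rw [not_finite_iff_infinite] at hinf
    obtain ⟨t, -, ht⟩ := (Set.infinite_univ (α := {I : Ideal R // I.IsMaximal})).exists_subset_card_eq (n + 1)
    have := hcard t
    omega
  haveI : Fintype {I : Ideal R // I.IsMaximal} := Fintype.ofFinite _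
  set r : ℕ := Fintype.card {I : Ideal R // I.IsMaximal} with hrdef
  have hrn : r ≤ n := by
    have := hcard (Finset.univ)
    simpa [Finset.card_univ] using this
  let eqv : Fin r ≃ {I : Ideal R // I.IsMaximal} := (Fintype.equivFin _).symm
  let Vfin : Fin r → Submodule K (Fin n → K) := fun k => Submodule.restrictScalars K (VV (eqv k))
  set U : Set (Fin n → K) := (⋃ k, (Vfin k : Set (Fin n → K)))ᶜ with hUdef
  have hUiff : ∀ x, x ∈ U ↔ ∀ I : {I : Ideal R // I.IsMaximal}, x ∉ VV I := by
    intro x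
    constructor
    · intro hx I h
      exact hx (Set.mem_iUnion.mpr ⟨eqv.symm I, by
        show x ∈ Vfin (eqv.symm I)
        show x ∈ Submodule.restrictScalars K (VV (eqv (eqv.symm I)))
        rw [Equiv.apply_symm_apply]
        exact h⟩)
    · intro h hx
      obtain ⟨k, hk⟩ := Set.mem_iUnion.mp hx
      exact h (eqv k) hk
  have hunit : ∀ (rr : R), IsUnit (φ rr) → IsUnit rr := fun rr h => unitLift φ hφ rr h
  have hGu : ∀ g : Matrix.GeneralLinearGroup (Fin n) K, g ∈ G →
      ∃ u : Rˣ, φ (u : R) = (g : Matrix (Fin n) (Fin n) K) := by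
    intro g hg
    obtain ⟨rr, hrr⟩ := hG g hg
    have hru : IsUnit rr := hunit rr (by rw [hrr]; exact ⟨g, rfl⟩)
    exact ⟨hru.unit, by rw [IsUnit.unit_spec, hrr]⟩
  have hgs : ∀ (u : Rˣ) (g : Matrix.GeneralLinearGroup (Fin n) K),
      φ (u : R) = (g : Matrix (Fin n) (Fin n) K) →
      ∀ x : Fin n → K, (g : Matrix (Fin n) (Fin n) K).mulVec x = (u : R) • x := by
    intro u g hu x
    rw [hsmul, hu]
  have hUsmul : ∀ (c : Rˣ) (x : Fin n → K), x ∈ U → (c : R) • x ∈ U := by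
    intro c x hx
    rw [hUiff] at hx ⊢
    intro I hmem
    apply hx I
    have h2 : ((c⁻¹ : Rˣ) : R) • ((c : R) • x) ∈ VV I := Submodule.smul_mem _ _ hmem
    rwa [← mul_smul, Units.inv_mul, one_smul] at h2
  have hUu : ∀ (h : R) (v : Fin n → K), h • v ∈ U → IsUnit h := by
    intro h v hmem
    by_contra hcon
    obtain ⟨I, hImax, hI⟩ := exists_max_ideal_of_mem_nonunits (mem_nonunits_iff.mpr hcon)
    exact (hUiff _).mp hmem ⟨I, hImax⟩ (hVle ⟨I, hImax⟩ (Submodule.smul_mem_smul hI trivial))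
  have hUopen : IsOpen U := by
    rw [hUdef]
    exact (isClosed_iUnion_of_finite fun k => (Vfin k).closed_of_finiteDimensional).isOpen_compl
  have hVfin_ne : ∀ k, Vfin k ≠ ⊤ := by
    intro k hEq
    exact hVne (eqv k) (Submodule.restrictScalars_injective K _ _
      (by rw [show Submodule.restrictScalars K (VV (eqv k)) = Vfin k from rfl, hEq,
        Submodule.restrictScalars_top]))
  have hUdense : Dense U := by
    have hUeq : U = ⋂ k, ((Vfin k : Set (Fin n → K)))ᶜ := by rw [hUdef, Set.compl_iUnion]
    rw [hUeq]
    refine dense_iInter_of_isOpen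
      (fun k => (Vfin k).closed_of_finiteDimensional.isOpen_compl) (fun k => ?_)
    have hint : interior ((Vfin k : Set (Fin n → K))) = ∅ := by
      by_contra hne
      have hne' : (interior ((Vfin k : Set (Fin n → K)))).Nonempty :=
        Set.nonempty_iff_ne_empty.mpr hne
      exact hVfin_ne k (Submodule.eq_top_of_nonempty_interior' (Vfin k) hne')
    have := interior_eq_empty_iff_dense_compl.mp hint
    exact this
  -- orbit basics
  have horb_self : ∀ v : Fin n → K, v ∈ glOrbit G v := by
    intro v
    refine ⟨1, G.one_mem, ?_⟩
    show ((1 : Matrix.GeneralLinearGroup (Fin n) K) : Matrix (Fin n) (Fin n) K).mulVec v = v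
    rw [Units.val_one, Matrix.one_mulVec]
  have horbU : ∀ v ∈ U, glOrbit G v ⊆ U := by
    intro v hv w hw
    obtain ⟨g, hg, rfl⟩ := hw
    obtain ⟨u, hu⟩ := hGu g hg
    rw [hgs u g hu]
    exact hUsmul u v hv
  have hcont : ∀ A : Matrix (Fin n) (Fin n) K, Continuous (fun x : Fin n → K => A.mulVec x) := by
    intro A
    have h1 := (A.mulVecLin).continuous_of_finiteDimensional
    exact h1.congr (fun x => by rw [Matrix.mulVecLin_apply])
  have hsmulcont : ∀ rr : R, Continuous (fun x : Fin n → K => rr • x) := by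
    intro rr
    exact (hcont (φ rr)).congr (fun x => by rw [← hsmul])
  have hclos_inv : ∀ (v : Fin n → K) (g : Matrix.GeneralLinearGroup (Fin n) K), g ∈ G →
      ∀ y ∈ closure (glOrbit G v),
        (g : Matrix (Fin n) (Fin n) K).mulVec y ∈ closure (glOrbit G v) := by
    intro v g hg y hy
    have hmap : Set.MapsTo (fun x => (g : Matrix (Fin n) (Fin n) K).mulVec x)
        (glOrbit G v) (glOrbit G v) := by
      rintro w ⟨A, hA, rfl⟩
      refine ⟨g * A, G.mul_mem hg hA, ?_⟩
      show ((g * A : Matrix.GeneralLinearGroup (Fin n) K) : Matrix (Fin n) (Fin n) K).mulVec v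
        = (g : Matrix (Fin n) (Fin n) K).mulVec ((A : Matrix (Fin n) (Fin n) K).mulVec v)
      rw [Matrix.mulVec_mulVec, ← Units.val_mul]
    exact hmap.closure (hcont _) hy
  have hmono : ∀ v x : Fin n → K, x ∈ closure (glOrbit G v) →
      closure (glOrbit G x) ⊆ closure (glOrbit G v) := by
    intro v x hx
    refine closure_minimal ?_ isClosed_closure
    rintro w ⟨A, hA, rfl⟩
    exact hclos_inv v A hA x hx
  -- the action linear map
  let act : (Fin n → K) → (R →ₗ[K] (Fin n → K)) := fun v =>
    { toFun := fun rr => rr • v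
      map_add' := fun a b => add_smul a b v
      map_smul' := fun k a => by simp [smul_assoc] }
  have horbY : ∀ v : Fin n → K, glOrbit G v ⊆ (LinearMap.range (act v) : Set (Fin n → K)) := by
    intro v w hw
    obtain ⟨g, hg, rfl⟩ := hw
    obtain ⟨u, hu⟩ := hGu g hg
    exact ⟨(u : R), (hgs u g hu _).symm⟩
  -- THE SYMMETRY LEMMA
  have hsym : ∀ v : Fin n → K, v ∈ U → ∀ x : Fin n → K, x ∈ closure (glOrbit G v) → x ∈ U →
      v ∈ closure (glOrbit G x) := by
    intro v hv x hxc hxU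
    have hxY : x ∈ LinearMap.range (act v) :=
      closure_minimal (horbY v) (LinearMap.range (act v)).closed_of_finiteDimensional hxc
    obtain ⟨τ, hτ⟩ := (act v).rangeRestrict.exists_rightInverse_of_surjective
      (LinearMap.range_eq_top.mpr (act v).surjective_rangeRestrict)
    have hτv : ∀ y : LinearMap.range (act v), (τ y : R) • v = (y : Fin n → K) := by
      intro y
      have h0 : (act v).rangeRestrict (τ y) = y := by
        rw [← LinearMap.comp_apply, hτ]; rfl
      have h1 := congrArg (Subtype.val) h0
      exact h1
    set h : R := τ ⟨x, hxY⟩ with hhdef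
    have hhv : h • v = x := hτv ⟨x, hxY⟩
    have hhu : IsUnit h := hUu h v (by rw [hhv]; exact hxU)
    obtain ⟨w, hworb, hwlim⟩ := mem_closure_iff_seq_limit.mp hxc
    choose g hgG hgv using hworb
    choose u hu using fun m => hGu (g m) (hgG m)
    have hwY : ∀ m, w m ∈ LinearMap.range (act v) := fun m => horbY v ⟨g m, hgG m, hgv m⟩
    set a : ℕ → R := fun m => τ ⟨w m, hwY m⟩ with hadef
    have hav : ∀ m, a m • v = w m := fun m => hτv _
    have hBt : Filter.Tendsto (fun m => φ (a m)) Filter.atTop (nhds (φ h)) := by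
      have h1 : Filter.Tendsto (fun m => (⟨w m, hwY m⟩ : LinearMap.range (act v)))
          Filter.atTop (nhds ⟨x, hxY⟩) := tendsto_subtype_rng.mpr hwlim
      have h2 := (((φ.toLinearMap.comp τ).continuous_of_finiteDimensional).tendsto
        (⟨x, hxY⟩ : LinearMap.range (act v)))
      exact h2.comp h1
    have hdet : Filter.Tendsto (fun m => (φ (a m)).det) Filter.atTop (nhds ((φ h).det)) :=
      ((Continuous.matrix_det continuous_id).tendsto _).comp hBt
    have hdet0 : (φ h).det ≠ 0 := by
      have h2 : IsUnit (φ h) := hhu.map φ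
      exact ((Matrix.isUnit_iff_isUnit_det _).mp h2).ne_zero
    have hev : ∀ᶠ m in Filter.atTop, (φ (a m)).det ≠ 0 := hdet.eventually_ne hdet0
    obtain ⟨N₀, hN₀⟩ := Filter.eventually_atTop.mp hev
    have haunit : ∀ m, N₀ ≤ m → IsUnit (a m) := fun m hm =>
      hunit _ ((Matrix.isUnit_iff_isUnit_det _).mpr (isUnit_iff_ne_zero.mpr (hN₀ m hm)))
    have hkey : ∀ m, N₀ ≤ m →
        (((g m)⁻¹ : Matrix.GeneralLinearGroup (Fin n) K) : Matrix (Fin n) (Fin n) K).mulVec x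
          = ((φ (a m))⁻¹).mulVec x := by
      intro m hm
      set b : Rˣ := (haunit m hm).unit with hbdef
      have hbv : (b : R) = a m := IsUnit.unit_spec _
      have hsv : ((u m : R)) • v = w m := by rw [← hgs (u m) (g m) (hu m), hgv m]
      have hzero : (((u m)⁻¹ : Rˣ) : R) • x - ((b⁻¹ : Rˣ) : R) • x = 0 := by
        have hfac : ((((u m)⁻¹ : Rˣ)) : R) - ((b⁻¹ : Rˣ) : R)
            = (((((u m)⁻¹ : Rˣ)) : R) * ((b⁻¹ : Rˣ) : R)) * ((b : R) - ((u m : R))) := by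
          rw [mul_sub]
          have e1 : (((((u m)⁻¹ : Rˣ)) : R) * ((b⁻¹ : Rˣ) : R)) * (b : R)
              = ((((u m)⁻¹ : Rˣ)) : R) := by
            rw [mul_assoc, Units.inv_mul, mul_one]
          have e2 : (((((u m)⁻¹ : Rˣ)) : R) * ((b⁻¹ : Rˣ) : R)) * ((u m : R))
              = ((b⁻¹ : Rˣ) : R) := by
            rw [mul_comm ((((u m)⁻¹ : Rˣ)) : R) ((b⁻¹ : Rˣ) : R), mul_assoc, Units.inv_mul,
              mul_one]
          rw [e1, e2]
        rw [← sub_smul, hfac, mul_smul]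
        have hbs : (((b : R) - (u m : R))) • x = 0 := by
          rw [← hhv]
          have h3 : ((b : R) - (u m : R)) • (h • v) = h • (((b : R) - (u m : R)) • v) := by
            rw [← mul_smul, mul_comm, mul_smul]
          rw [h3]
          have h4 : ((b : R) - (u m : R)) • v = 0 := by
            rw [sub_smul, hbv, hav, hsv, sub_self]
          rw [h4, smul_zero]
        rw [hbs, smul_zero]
      have hRid : (((u m)⁻¹ : Rˣ) : R) • x = ((b⁻¹ : Rˣ) : R) • x := sub_eq_zero.mp hzero
      have hL : (((g m)⁻¹ : Matrix.GeneralLinearGroup (Fin n) K) : Matrix (Fin n) (Fin n) K)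
          = φ ((((u m)⁻¹ : Rˣ)) : R) := by
        have h1 : φ ((((u m)⁻¹ : Rˣ)) : R) * ((g m : Matrix.GeneralLinearGroup (Fin n) K) :
            Matrix (Fin n) (Fin n) K) = 1 := by
          rw [← hu m, ← map_mul, Units.inv_mul, map_one]
        have h2 : ((g m : Matrix.GeneralLinearGroup (Fin n) K) : Matrix (Fin n) (Fin n) K) *
            (((g m)⁻¹ : Matrix.GeneralLinearGroup (Fin n) K) : Matrix (Fin n) (Fin n) K) = 1 := by
          rw [← Units.val_mul, mul_inv_cancel, Units.val_one]
        exact (left_inv_eq_right_inv h1 h2).symm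
      have hR : (φ (a m))⁻¹ = φ ((b⁻¹ : Rˣ) : R) := by
        apply Matrix.inv_eq_right_inv
        rw [← hbv, ← map_mul, Units.mul_inv, map_one]
      rw [hL, hR, ← hsmul, ← hsmul, hRid]
    have hinv : Filter.Tendsto (fun m => (φ (a m))⁻¹) Filter.atTop (nhds ((φ h)⁻¹)) := by
      have hadj : Filter.Tendsto (fun m => (φ (a m)).adjugate) Filter.atTop
          (nhds ((φ h).adjugate)) :=
        ((Continuous.matrix_adjugate continuous_id).tendsto _).comp hBt
      have hdinv : Filter.Tendsto (fun m => ((φ (a m)).det)⁻¹) Filter.atTop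
          (nhds (((φ h).det)⁻¹)) := hdet.inv₀ hdet0
      have hsm := hdinv.smul hadj
      have hre : ∀ B : Matrix (Fin n) (Fin n) K, B⁻¹ = (B.det)⁻¹ • B.adjugate := by
        intro B
        rw [Matrix.inv_def, Ring.inverse_eq_inv]
      simp_rw [hre]
      exact hsm
    have hlim2 : Filter.Tendsto (fun m => ((φ (a m))⁻¹).mulVec x) Filter.atTop
        (nhds (((φ h)⁻¹).mulVec x)) := by
      let L : Matrix (Fin n) (Fin n) K →ₗ[K] (Fin n → K) :=
        { toFun := fun B => B.mulVec x
          map_add' := fun B C => Matrix.add_mulVec B C x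
          map_smul' := fun c B => by simp [Matrix.smul_mulVec] }
      exact ((L.continuous_of_finiteDimensional).tendsto _).comp hinv
    have hval : ((φ h)⁻¹).mulVec x = v := by
      have hspec : ((hhu.unit : Rˣ) : R) = h := IsUnit.unit_spec _
      have hinv2 : (φ h)⁻¹ = φ (((hhu.unit⁻¹ : Rˣ)) : R) := by
        apply Matrix.inv_eq_right_inv
        rw [← map_mul]
        rw [show h * (((hhu.unit⁻¹ : Rˣ)) : R) = 1 from hhu.mul_val_inv]
        rw [map_one]
      rw [hinv2, ← hsmul, ← hhv, ← mul_smul]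
      rw [show (((hhu.unit⁻¹ : Rˣ)) : R) * h = 1 from hhu.val_inv_mul, one_smul]
    rw [mem_closure_iff_seq_limit]
    refine ⟨fun m => (((g (m + N₀))⁻¹ : Matrix.GeneralLinearGroup (Fin n) K) :
      Matrix (Fin n) (Fin n) K).mulVec x, ?_, ?_⟩
    · intro m
      exact ⟨(g (m + N₀))⁻¹, G.inv_mem (hgG _), rfl⟩
    · have hshift : Filter.Tendsto (fun m => ((φ (a (m + N₀)))⁻¹).mulVec x)
          Filter.atTop (nhds v) := by
        have h5 := hlim2.comp (Filter.tendsto_add_atTop_nat N₀)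
        rwa [hval] at h5
      exact hshift.congr (fun m => (hkey (m + N₀) (Nat.le_add_left _ _)).symm)
  -- minimality
  have hmin : ∀ v : Fin n → K, v ∈ U → ∀ x ∈ closure (glOrbit G v) ∩ U,
      closure (glOrbit G x) ∩ U = closure (glOrbit G v) ∩ U := by
    rintro v hv x ⟨hxc, hxU⟩
    apply Set.Subset.antisymm
    · exact Set.inter_subset_inter_left U (hmono v x hxc)
    · exact Set.inter_subset_inter_left U (hmono x v (hsym v hv x hxc hxU))
  -- locally dense: membership in U
  have hld_memU : ∀ v : Fin n → K, (interior (closure (glOrbit G v))).Nonempty → v ∈ U := by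
    intro v hne
    rw [hUiff]
    intro I hmem
    have horbV : glOrbit G v ⊆ ((Submodule.restrictScalars K (VV I) : Submodule K (Fin n → K)) :
        Set (Fin n → K)) := by
      rintro w ⟨gg, hgg, rfl⟩
      obtain ⟨uu, huu⟩ := hGu gg hgg
      rw [hgs uu gg huu]
      exact Submodule.smul_mem _ _ hmem
    have hclo := closure_minimal horbV
      (Submodule.restrictScalars K (VV I)).closed_of_finiteDimensional
    obtain ⟨y, hy⟩ := hne
    have hyint := interior_mono hclo hy
    have htop := Submodule.eq_top_of_nonempty_interior'
      (Submodule.restrictScalars K (VV I)) ⟨y, hyint⟩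
    exact hVne I (Submodule.restrictScalars_injective K _ _
      (by rw [htop, Submodule.restrictScalars_top]))
  -- cyclicity
  have hld_cyc : ∀ v : Fin n → K, (interior (closure (glOrbit G v))).Nonempty →
      ∀ w ∈ U, ∃ c : Rˣ, (c : R) • v = w := by
    intro v hne w hw
    have hrange_top : LinearMap.range (act v) = ⊤ := by
      by_contra hne2
      obtain ⟨y, hy⟩ := hne
      have hyint := interior_mono (closure_minimal (horbY v)
        (LinearMap.range (act v)).closed_of_finiteDimensional) hy
      exact hne2 (Submodule.eq_top_of_nonempty_interior' _ ⟨y, hyint⟩)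
    obtain ⟨rr, hrr⟩ : ∃ rr : R, rr • v = w := by
      have hmem : w ∈ LinearMap.range (act v) := by rw [hrange_top]; trivial
      obtain ⟨rr, h⟩ := hmem
      exact ⟨rr, h⟩
    have hru : IsUnit rr := hUu rr v (by rw [hrr]; exact hw)
    exact ⟨hru.unit, by rw [IsUnit.unit_spec]; exact hrr⟩
  -- homeomorphisms
  have hhomeo : ∀ c : Rˣ, ∃ e : Homeomorph (Fin n → K) (Fin n → K),
      ∀ y : Fin n → K, e y = (c : R) • y := by
    intro c
    refine ⟨{ toFun := fun y => (c : R) • y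
              invFun := fun y => ((c⁻¹ : Rˣ) : R) • y
              left_inv := fun y => by
                show ((c⁻¹ : Rˣ) : R) • ((c : R) • y) = y
                rw [← mul_smul, Units.inv_mul, one_smul]
              right_inv := fun y => by
                show (c : R) • (((c⁻¹ : Rˣ) : R) • y) = y
                rw [← mul_smul, Units.mul_inv, one_smul]
              continuous_toFun := hsmulcont _
              continuous_invFun := hsmulcont _ }, fun y => rfl⟩
  have htrans : ∀ (c : Rˣ) (z : Fin n → K),
      (fun y => (c : R) • y) '' glOrbit G z = glOrbit G ((c : R) • z) := by
    intro c z
    ext w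
    constructor
    · rintro ⟨y, ⟨gg, hgg, rfl⟩, rfl⟩
      refine ⟨gg, hgg, ?_⟩
      obtain ⟨uu, huu⟩ := hGu gg hgg
      show (gg : Matrix (Fin n) (Fin n) K).mulVec ((c : R) • z)
        = (c : R) • ((gg : Matrix (Fin n) (Fin n) K).mulVec z)
      rw [hgs uu gg huu, hgs uu gg huu, ← mul_smul, ← mul_smul, mul_comm]
    · rintro ⟨gg, hgg, rfl⟩
      obtain ⟨uu, huu⟩ := hGu gg hgg
      refine ⟨(gg : Matrix (Fin n) (Fin n) K).mulVec z, ⟨gg, hgg, rfl⟩, ?_⟩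
      show (c : R) • ((gg : Matrix (Fin n) (Fin n) K).mulVec z)
        = (gg : Matrix (Fin n) (Fin n) K).mulVec ((c : R) • z)
      rw [hgs uu gg huu, hgs uu gg huu, ← mul_smul, ← mul_smul, mul_comm]
  -- openness of closure ∩ U
  have hSopen : ∀ v : Fin n → K, (interior (closure (glOrbit G v))).Nonempty → v ∈ U →
      IsOpen (closure (glOrbit G v) ∩ U) := by
    intro v hne hvU
    rw [isOpen_iff_forall_mem_open]
    intro x hx
    obtain ⟨y0, hy0D, hy0U⟩ : ∃ y0, y0 ∈ interior (closure (glOrbit G v)) ∧ y0 ∈ U := by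
      obtain ⟨y0, h1, h2⟩ := hUdense.inter_open_nonempty _ isOpen_interior hne
      exact ⟨y0, h1, h2⟩
    have hy0S : y0 ∈ closure (glOrbit G v) ∩ U := ⟨interior_subset hy0D, hy0U⟩
    obtain ⟨cx, hcx⟩ := hld_cyc v hne x hx.2
    obtain ⟨c0, hc0⟩ := hld_cyc v hne y0 hy0U
    set q : Rˣ := cx * c0⁻¹ with hqdef
    have hqc0 : ((q : R)) * (c0 : R) = (cx : R) := by
      rw [hqdef, Units.val_mul, mul_assoc, Units.inv_mul, mul_one]
    have hqy0 : (q : R) • y0 = x := by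
      rw [← hc0, ← mul_smul, hqc0, hcx]
    obtain ⟨e, he⟩ := hhomeo q
    refine ⟨e '' (interior (closure (glOrbit G v)) ∩ U), ?_, ?_, ?_⟩
    · rintro z ⟨z', ⟨hz'D, hz'U⟩, rfl⟩
      have hz'S : z' ∈ closure (glOrbit G v) ∩ U := ⟨interior_subset hz'D, hz'U⟩
      have hSy0 : closure (glOrbit G y0) ∩ U = closure (glOrbit G v) ∩ U := hmin v hvU y0 hy0S
      have hz'y0 : z' ∈ closure (glOrbit G y0) := by
        have h6 : z' ∈ closure (glOrbit G y0) ∩ U := by rw [hSy0]; exact hz'S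
        exact h6.1
      have himg : e '' closure (glOrbit G y0) ⊆ closure (glOrbit G x) := by
        rw [Homeomorph.image_closure]
        have h7 : e '' glOrbit G y0 = glOrbit G x := by
          have h8 : e '' glOrbit G y0 = (fun y => (q : R) • y) '' glOrbit G y0 :=
            Set.image_congr fun y _ => he y
          rw [h8, htrans q y0, hqy0]
        rw [h7]
      have hz : e z' ∈ closure (glOrbit G x) := himg ⟨z', hz'y0, rfl⟩
      have hzU : e z' ∈ U := by rw [he]; exact hUsmul q z' hz'U
      have hSx : closure (glOrbit G x) ∩ U = closure (glOrbit G v) ∩ U := hmin v hvU x hx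
      have h9 : e z' ∈ closure (glOrbit G x) ∩ U := ⟨hz, hzU⟩
      rw [hSx] at h9
      exact h9
    · exact (Homeomorph.isOpenMap e) _ (IsOpen.inter isOpen_interior hUopen)
    · exact ⟨y0, ⟨hy0D, hy0U⟩, by rw [he, hqy0]⟩
  -- density in components
  have hcompdense : ∀ v : Fin n → K, (interior (closure (glOrbit G v))).Nonempty →
      ∀ C : Set (Fin n → K), (∃ x ∈ U, C = connectedComponentIn U x) →
        (glOrbit G v ∩ C).Nonempty → C ⊆ closure (glOrbit G v) := by
    intro v hne C hC hmeet
    obtain ⟨x₀, hx₀, rfl⟩ := hC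
    obtain ⟨y, hyO, hyC⟩ := hmeet
    have hvU : v ∈ U := hld_memU v hne
    have hCU : connectedComponentIn U x₀ ⊆ U := connectedComponentIn_subset U x₀
    have hSop : IsOpen (closure (glOrbit G v) ∩ U) := hSopen v hne hvU
    have hpre : IsPreconnected (connectedComponentIn U x₀) := isPreconnected_connectedComponentIn
    by_contra hnot
    rw [Set.not_subset] at hnot
    obtain ⟨w, hwC, hwB⟩ := hnot
    have hcov : connectedComponentIn U x₀ ⊆
        (closure (glOrbit G v) ∩ U) ∪ (closure (glOrbit G v))ᶜ := by
      intro z hz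
      by_cases hzc : z ∈ closure (glOrbit G v)
      · exact Or.inl ⟨hzc, hCU hz⟩
      · exact Or.inr hzc
    have h1 : (connectedComponentIn U x₀ ∩ (closure (glOrbit G v) ∩ U)).Nonempty :=
      ⟨y, hyC, subset_closure hyO, hCU hyC⟩
    have h2 : (connectedComponentIn U x₀ ∩ (closure (glOrbit G v))ᶜ).Nonempty := ⟨w, hwC, hwB⟩
    obtain ⟨z, hzC, ⟨hzc, _⟩, hzc'⟩ := hpre _ _ hSop isClosed_closure.isOpen_compl hcov h1 h2
    exact hzc' hzc
  -- ASSEMBLY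
  refine ⟨U, hUopen, hUdense, ?_, ⟨r, Vfin, hrn, ?_, ?_, ?_⟩, ?_, ?_⟩
  · intro A hA v hv
    obtain ⟨u, hu⟩ := hGu A hA
    rw [hgs u A hu]
    exact hUsmul u v hv
  · intro k A hA x hx
    obtain ⟨u, hu⟩ := hGu A hA
    rw [hgs u A hu]
    exact Submodule.smul_mem (VV (eqv k)) ((u : R)) hx
  · intro k
    obtain ⟨hplus, hor⟩ := codim (eqv k).1 (eqv k).2 (VV (eqv k)) (hVle _) (hVne _) (hVmax _)
    have hVfk : Module.finrank K (Vfin k) = Module.finrank K (restrictScalars K (VV (eqv k))) := rfl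
    rcases hor with h1 | h1
    · left; rw [hVfk]; omega
    · right; rw [hVfk]; omega
  · rw [hUdef, compl_compl]
  · intro v horb x hx
    exact hmin v (horb (horb_self v)) x hx
  · intro v hne
    have hvU : v ∈ U := hld_memU v hne
    refine ⟨horbU v hvU, ?_⟩
    intro C hC hmeet
    refine ⟨hcompdense v hne C hC hmeet, ?_⟩
    intro w hw hmeetw
    obtain ⟨c, hc⟩ := hld_cyc v hne w hw
    obtain ⟨e, he⟩ := hhomeo c
    have hclosw : closure (glOrbit G w) = e '' closure (glOrbit G v) := by
      rw [Homeomorph.image_closure]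
      congr 1
      rw [show e '' glOrbit G v = (fun y => (c : R) • y) '' glOrbit G v from
        Set.image_congr fun y _ => he y, htrans c v, hc]
    have hnew : (interior (closure (glOrbit G w))).Nonempty := by
      rw [hclosw]
      have hsub : e '' interior (closure (glOrbit G v)) ⊆ e '' closure (glOrbit G v) :=
        Set.image_mono interior_subset
      have hopen : IsOpen (e '' interior (closure (glOrbit G v))) :=
        e.isOpenMap _ isOpen_interior
      obtain ⟨y, hy⟩ := hne
      exact ⟨e y, interior_maximal hsub hopen ⟨y, hy, rfl⟩⟩
    exact hcompdense w hnew C hC hmeetw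


end LDO

/-- Let `K = ℝ` or `ℂ` and `G` an abelian subgroup of `GL(n, K)`. There is a `G`-invariant dense
open set `U ⊆ Kⁿ` whose complement is a union of at most `n` `G`-invariant subspaces of
dimension `n-1` or `n-2`, in which every orbit is minimal in `U`, such that: if an orbit
`O = G(v)` is locally dense in `Kⁿ`, then `O ⊆ U` and for every connected component `C` of `U`
meeting `O`: (i) `O` is dense in `C`; (ii) every orbit of a point of `U` meeting `C` is dense
in `C`. -/
theorem locally_dense_orbit {K : Type*} [RCLike K] (n : ℕ)
    (G : Subgroup (Matrix.GeneralLinearGroup (Fin n) K))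
    (hGcomm : ∀ A ∈ G, ∀ B ∈ G, A * B = B * A) :
    ∃ U : Set (Fin n → K),
      IsOpen U ∧ Dense U ∧
      (∀ A ∈ G, ∀ v ∈ U, (A : Matrix (Fin n) (Fin n) K).mulVec v ∈ U) ∧
      (∃ (r : ℕ) (V : Fin r → Submodule K (Fin n → K)), r ≤ n ∧
        (∀ k, ∀ A ∈ G, ∀ x ∈ V k, (A : Matrix (Fin n) (Fin n) K).mulVec x ∈ V k) ∧
        (∀ k, Module.finrank K (V k) = n - 1 ∨ Module.finrank K (V k) = n - 2) ∧
        Uᶜ = ⋃ k, (V k : Set (Fin n → K))) ∧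
      (∀ v : Fin n → K, glOrbit G v ⊆ U →
        ∀ x ∈ closure (glOrbit G v) ∩ U,
          closure (glOrbit G x) ∩ U = closure (glOrbit G v) ∩ U) ∧
      (∀ v : Fin n → K, (interior (closure (glOrbit G v))).Nonempty →
        glOrbit G v ⊆ U ∧
        (∀ C : Set (Fin n → K), (∃ x ∈ U, C = connectedComponentIn U x) →
          (glOrbit G v ∩ C).Nonempty →
          C ⊆ closure (glOrbit G v) ∧
          (∀ w ∈ U, (glOrbit G w ∩ C).Nonempty → C ⊆ closure (glOrbit G w)))) := by

  classical
  set SG : Set (Matrix (Fin n) (Fin n) K) :=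
    {m | ∃ g ∈ G, (g : Matrix (Fin n) (Fin n) K) = m} with hSGdef
  have hcomm' : ∀ a ∈ SG, ∀ b ∈ SG, a * b = b * a := by
    rintro a ⟨g1, hg1, rfl⟩ b ⟨g2, hg2, rfl⟩
    have h := hGcomm g1 hg1 g2 hg2
    calc (g1 : Matrix (Fin n) (Fin n) K) * (g2 : Matrix (Fin n) (Fin n) K)
        = ((g1 * g2 : Matrix.GeneralLinearGroup (Fin n) K) : Matrix (Fin n) (Fin n) K) :=
          (Units.val_mul _ _).symm
      _ = ((g2 * g1 : Matrix.GeneralLinearGroup (Fin n) K) : Matrix (Fin n) (Fin n) K) := by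
          rw [h]
      _ = (g2 : Matrix (Fin n) (Fin n) K) * (g1 : Matrix (Fin n) (Fin n) K) := Units.val_mul _ _
  letI : CommRing ↥(Algebra.adjoin K SG) := Algebra.adjoinCommRingOfComm K hcomm'
  haveI : Module.Finite K ↥(Algebra.adjoin K SG) :=
    FiniteDimensional.of_injective ((Algebra.adjoin K SG).val.toLinearMap) Subtype.val_injective
  letI instSMul : SMul ↥(Algebra.adjoin K SG) (Fin n → K) :=
    ⟨fun A x => (A : Matrix (Fin n) (Fin n) K).mulVec x⟩
  have hsmul : ∀ (r : ↥(Algebra.adjoin K SG)) (x : Fin n → K),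
      r • x = (r : Matrix (Fin n) (Fin n) K).mulVec x := fun _ _ => rfl
  letI instMA : MulAction ↥(Algebra.adjoin K SG) (Fin n → K) :=
    { one_smul := fun x => by
        show ((1 : ↥(Algebra.adjoin K SG)) : Matrix (Fin n) (Fin n) K).mulVec x = x
        rw [OneMemClass.coe_one, Matrix.one_mulVec]
      mul_smul := fun A B x => by
        show ((A * B : ↥(Algebra.adjoin K SG)) : Matrix (Fin n) (Fin n) K).mulVec x
          = (A : Matrix (Fin n) (Fin n) K).mulVec ((B : Matrix (Fin n) (Fin n) K).mulVec x)
        rw [MulMemClass.coe_mul, Matrix.mulVec_mulVec] }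
  letI instDMA : DistribMulAction ↥(Algebra.adjoin K SG) (Fin n → K) :=
    { smul_zero := fun A => Matrix.mulVec_zero _
      smul_add := fun A x y => Matrix.mulVec_add _ x y }
  letI instMod : Module ↥(Algebra.adjoin K SG) (Fin n → K) :=
    { add_smul := fun A B x => by
        show ((A + B : ↥(Algebra.adjoin K SG)) : Matrix (Fin n) (Fin n) K).mulVec x
          = (A : Matrix (Fin n) (Fin n) K).mulVec x + (B : Matrix (Fin n) (Fin n) K).mulVec x
        rw [AddMemClass.coe_add, Matrix.add_mulVec]
      zero_smul := fun x => by
        show ((0 : ↥(Algebra.adjoin K SG)) : Matrix (Fin n) (Fin n) K).mulVec x = 0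
        rw [ZeroMemClass.coe_zero, Matrix.zero_mulVec] }
  haveI instTower : IsScalarTower K ↥(Algebra.adjoin K SG) (Fin n → K) := ⟨fun k A x => by
    show ((k • A : ↥(Algebra.adjoin K SG)) : Matrix (Fin n) (Fin n) K).mulVec x
      = k • ((A : Matrix (Fin n) (Fin n) K).mulVec x)
    rw [SetLike.val_smul, Matrix.smul_mulVec]⟩
  have hG' : ∀ g : Matrix.GeneralLinearGroup (Fin n) K, g ∈ G →
      ∃ rr : ↥(Algebra.adjoin K SG),
        (Algebra.adjoin K SG).val rr = (g : Matrix (Fin n) (Fin n) K) :=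
    fun g hg => ⟨⟨(g : Matrix (Fin n) (Fin n) K), Algebra.subset_adjoin ⟨g, hg, rfl⟩⟩, rfl⟩
  exact LDO.aux G (Algebra.adjoin K SG).val Subtype.val_injective hsmul hG'
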